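/- Let D ⊆ ℝ^m, let L ∈ ℝ^{m×m}, and let (x̂_j, y_j), j = 1,…,M, be data with x̂_j ∈ D that are consistent with L. Let f̄ be the central approximation f̄(x) := ½ (max_j (y_j − ‖L(x − x̂_j)‖₂)) + ½ (min_j (y_j + ‖L(x − x̂_j)‖₂)). Then for every x ∈ D and every function f̃ : D → ℝ with f̃(x̂_j) = y_j for all j, sup{ |f(x) − f̄(x)| : f ∈ 𝓛(D, L), f(x̂_j) = y_j ∀j } ≤ sup{ |f(x) − f̃(x)| : f ∈ 𝓛(D, L), f(x̂_j) = y_j ∀j }; i.e., the central approximation pointwise minimizes the worst-case error among all interpolants of the data. -/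
import Mathlib


open Matrix

/-- The matrix-vector product as a map on Euclidean space,
so that `‖mulVecE L v‖` is the Euclidean 2-norm of `L v`. -/
noncomputable def mulVecE {m : ℕ} (L : Matrix (Fin m) (Fin m) ℝ)
    (v : EuclideanSpace ℝ (Fin m)) : EuclideanSpace ℝ (Fin m) :=
  Matrix.toEuclideanCLM (𝕜 := ℝ) L v

/-- The Lipschitz-matrix class `𝓛(D, L)`. -/
def MemLip {m : ℕ} (D : Set (EuclideanSpace ℝ (Fin m))) (L : Matrix (Fin m) (Fin m) ℝ)
    (f : EuclideanSpace ℝ (Fin m) → ℝ) : Prop :=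
  ∀ x₁ ∈ D, ∀ x₂ ∈ D, |f x₁ - f x₂| ≤ ‖mulVecE L (x₁ - x₂)‖

/-- The lower envelope `f₋(x) = max_j (y_j - ‖L(x - x̂_j)‖₂)` determined by data `(x̂_j, y_j)`. -/
noncomputable def lowerEnv {m M : ℕ} (L : Matrix (Fin m) (Fin m) ℝ)
    (xh : Fin M → EuclideanSpace ℝ (Fin m)) (y : Fin M → ℝ)
    (x : EuclideanSpace ℝ (Fin m)) : ℝ :=
  ⨆ j, (y j - ‖mulVecE L (x - xh j)‖)

/-- The upper envelope `f₊(x) = min_j (y_j + ‖L(x - x̂_j)‖₂)` determined by data `(x̂_j, y_j)`. -/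
noncomputable def upperEnv {m M : ℕ} (L : Matrix (Fin m) (Fin m) ℝ)
    (xh : Fin M → EuclideanSpace ℝ (Fin m)) (y : Fin M → ℝ)
    (x : EuclideanSpace ℝ (Fin m)) : ℝ :=
  ⨅ j, (y j + ‖mulVecE L (x - xh j)‖)

/-- The central approximation `f̄ = (f₋ + f₊)/2`. -/
noncomputable def centralApprox {m M : ℕ} (L : Matrix (Fin m) (Fin m) ℝ)
    (xh : Fin M → EuclideanSpace ℝ (Fin m)) (y : Fin M → ℝ)
    (x : EuclideanSpace ℝ (Fin m)) : ℝ :=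
  (lowerEnv L xh y x + upperEnv L xh y x) / 2
lemma mulVecE_revtri {m : ℕ} (L : Matrix (Fin m) (Fin m) ℝ)
    (a b : EuclideanSpace ℝ (Fin m)) :
    |‖mulVecE L a‖ - ‖mulVecE L b‖| ≤ ‖mulVecE L (a - b)‖ := by
  have h : mulVecE L (a - b) = mulVecE L a - mulVecE L b := map_sub _ a b
  rw [h]; exact abs_norm_sub_norm_le _ _

lemma mulVecE_norm_neg {m : ℕ} (L : Matrix (Fin m) (Fin m) ℝ)
    (a : EuclideanSpace ℝ (Fin m)) : ‖mulVecE L (-a)‖ = ‖mulVecE L a‖ := by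
  have h : mulVecE L (-a) = -(mulVecE L a) := map_neg _ a
  rw [h, norm_neg]

/-- the central approximation pointwise minimizes the worst-case error among all
interpolants of the data. -/
theorem centralApprox_minimizes_worst_case {m M : ℕ} (hM : 0 < M)
    (D : Set (EuclideanSpace ℝ (Fin m))) (L : Matrix (Fin m) (Fin m) ℝ)
    (xh : Fin M → EuclideanSpace ℝ (Fin m)) (y : Fin M → ℝ)
    (hx : ∀ j, xh j ∈ D)
    (hcons : ∀ i j, |y i - y j| ≤ ‖mulVecE L (xh i - xh j)‖)
    (x : EuclideanSpace ℝ (Fin m)) (hxD : x ∈ D)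
    (ft : EuclideanSpace ℝ (Fin m) → ℝ) (hft : ∀ j, ft (xh j) = y j) :
    sSup {e : ℝ | ∃ f : EuclideanSpace ℝ (Fin m) → ℝ,
        MemLip D L f ∧ (∀ j, f (xh j) = y j) ∧ e = |f x - centralApprox L xh y x|}
      ≤ sSup {e : ℝ | ∃ f : EuclideanSpace ℝ (Fin m) → ℝ,
        MemLip D L f ∧ (∀ j, f (xh j) = y j) ∧ e = |f x - ft x|} := by
  haveI : Nonempty (Fin M) := ⟨⟨0, hM⟩⟩
  set fl := lowerEnv L xh y with hfl
  set fu := upperEnv L xh y with hfu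
  have bddA : ∀ z : EuclideanSpace ℝ (Fin m),
      BddAbove (Set.range fun j => y j - ‖mulVecE L (z - xh j)‖) :=
    fun z => Set.Finite.bddAbove (Set.finite_range _)
  have bddB : ∀ z : EuclideanSpace ℝ (Fin m),
      BddBelow (Set.range fun j => y j + ‖mulVecE L (z - xh j)‖) :=
    fun z => Set.Finite.bddBelow (Set.finite_range _)
  -- Lipschitz property of the envelopes
  have hflLip : MemLip D L fl := by
    intro x₁ _ x₂ _
    rw [abs_sub_le_iff]
    constructor
    · refine sub_le_iff_le_add.mpr (ciSup_le fun j => ?_)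
      have h1 := (abs_le.mp (mulVecE_revtri L (x₂ - xh j) (x₁ - xh j))).2
      have h2 : (x₂ - xh j) - (x₁ - xh j) = -(x₁ - x₂) := by abel
      rw [h2, mulVecE_norm_neg] at h1
      have h3 : y j - ‖mulVecE L (x₂ - xh j)‖ ≤ fl x₂ := le_ciSup (bddA x₂) j
      linarith
    · refine sub_le_iff_le_add.mpr (ciSup_le fun j => ?_)
      have h1 := (abs_le.mp (mulVecE_revtri L (x₁ - xh j) (x₂ - xh j))).2
      have h2 : (x₁ - xh j) - (x₂ - xh j) = x₁ - x₂ := by abel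
      rw [h2] at h1
      have h3 : y j - ‖mulVecE L (x₁ - xh j)‖ ≤ fl x₁ := le_ciSup (bddA x₁) j
      linarith
  have hfuLip : MemLip D L fu := by
    intro x₁ _ x₂ _
    rw [abs_sub_le_iff]
    constructor
    · have hstep : fu x₁ - ‖mulVecE L (x₁ - x₂)‖ ≤ fu x₂ := by
        refine le_ciInf fun j => ?_
        have h1 := (abs_le.mp (mulVecE_revtri L (x₁ - xh j) (x₂ - xh j))).2
        have h2 : (x₁ - xh j) - (x₂ - xh j) = x₁ - x₂ := by abel
        rw [h2] at h1
        have h3 : fu x₁ ≤ y j + ‖mulVecE L (x₁ - xh j)‖ := ciInf_le (bddB x₁) j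
        linarith
      linarith
    · have hstep : fu x₂ - ‖mulVecE L (x₁ - x₂)‖ ≤ fu x₁ := by
        refine le_ciInf fun j => ?_
        have h1 := (abs_le.mp (mulVecE_revtri L (x₂ - xh j) (x₁ - xh j))).2
        have h2 : (x₂ - xh j) - (x₁ - xh j) = -(x₁ - x₂) := by abel
        rw [h2, mulVecE_norm_neg] at h1
        have h3 : fu x₂ ≤ y j + ‖mulVecE L (x₂ - xh j)‖ := ciInf_le (bddB x₂) j
        linarith
      linarith
  -- Interpolation property of the envelopes
  have hzero : ∀ i : Fin M, ‖mulVecE L (xh i - xh i)‖ = 0 := by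
    intro i
    rw [sub_self]
    have h0 : mulVecE L 0 = 0 := map_zero (Matrix.toEuclideanCLM (𝕜 := ℝ) L)
    rw [h0, norm_zero]
  have hflI : ∀ i, fl (xh i) = y i := by
    intro i
    apply le_antisymm
    · refine ciSup_le fun j => ?_
      have := (abs_le.mp (hcons j i)).2
      have h2 : ‖mulVecE L (xh j - xh i)‖ = ‖mulVecE L (xh i - xh j)‖ := by
        rw [show xh j - xh i = -(xh i - xh j) by abel, mulVecE_norm_neg]
      linarith
    · have h3 : y i - ‖mulVecE L (xh i - xh i)‖ ≤ fl (xh i) := le_ciSup (bddA _) i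
      rw [hzero i] at h3; linarith
  have hfuI : ∀ i, fu (xh i) = y i := by
    intro i
    apply le_antisymm
    · have h3 : fu (xh i) ≤ y i + ‖mulVecE L (xh i - xh i)‖ := ciInf_le (bddB _) i
      rw [hzero i] at h3; linarith
    · refine le_ciInf fun j => ?_
      have := (abs_le.mp (hcons i j)).2
      have h2 : ‖mulVecE L (xh i - xh j)‖ = ‖mulVecE L (xh i - xh j)‖ := rfl
      linarith
  -- Sandwich: any admissible f lies between the envelopes
  have hsand : ∀ f, MemLip D L f → (∀ j, f (xh j) = y j) → fl x ≤ f x ∧ f x ≤ fu x := by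
    intro f hLip hI
    constructor
    · refine ciSup_le fun j => ?_
      have := (abs_le.mp (hLip x hxD (xh j) (hx j))).1
      rw [hI j] at this; linarith
    · refine le_ciInf fun j => ?_
      have := (abs_le.mp (hLip x hxD (xh j) (hx j))).2
      rw [hI j] at this; linarith
  have hflfu : fl x ≤ fu x := (hsand fl hflLip hflI).2
  -- RHS set and its properties
  set S₂ := {e : ℝ | ∃ f : EuclideanSpace ℝ (Fin m) → ℝ,
      MemLip D L f ∧ (∀ j, f (xh j) = y j) ∧ e = |f x - ft x|} with hS₂
  have hmemL : |fl x - ft x| ∈ S₂ := ⟨fl, hflLip, hflI, rfl⟩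
  have hmemU : |fu x - ft x| ∈ S₂ := ⟨fu, hfuLip, hfuI, rfl⟩
  have hbdd : BddAbove S₂ := by
    refine ⟨max |fl x - ft x| |fu x - ft x|, ?_⟩
    rintro e ⟨f, hLip, hI, rfl⟩
    obtain ⟨h1, h2⟩ := hsand f hLip hI
    rw [abs_le]
    constructor
    · have hb : -(max |fl x - ft x| |fu x - ft x|) ≤ fl x - ft x := by
        have := neg_abs_le (fl x - ft x)
        have h' := le_max_left |fl x - ft x| |fu x - ft x|
        linarith
      linarith
    · have hb : fu x - ft x ≤ max |fl x - ft x| |fu x - ft x| := by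
        have := le_abs_self (fu x - ft x)
        have h' := le_max_right |fl x - ft x| |fu x - ft x|
        linarith
      linarith
  have hL : |fl x - ft x| ≤ sSup S₂ := le_csSup hbdd hmemL
  have hU : |fu x - ft x| ≤ sSup S₂ := le_csSup hbdd hmemU
  have hSnn : 0 ≤ sSup S₂ := le_trans (abs_nonneg _) hL
  have hkey : (fu x - fl x) / 2 ≤ sSup S₂ := by
    have h1 := le_abs_self (fu x - ft x)
    have h2 := le_abs_self (ft x - fl x)
    rw [abs_sub_comm] at h2
    linarith
  refine Real.sSup_le ?_ hSnn
  rintro e ⟨f, hLip, hI, rfl⟩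
  obtain ⟨h1, h2⟩ := hsand f hLip hI
  have : |f x - centralApprox L xh y x| ≤ (fu x - fl x) / 2 := by
    rw [abs_le, centralApprox]
    simp only [← hfl, ← hfu]
    constructor <;> linarith
  exact this.trans hkey
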